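/- arXiv:2503.17375 — 7 statements merged into one kernel-verified Lean document; each statement's English description precedes it below -/
import Mathlib

section
/- Let μ ∈ ℝ and σ ≥ 0, and let X = exp(μ + σZ) and X′ = exp(μ + σZ′), where Z and Z′ are independent standard normal random variables. Then the Gini coefficient of the LogNormal(μ, σ²) distribution satisfies E[|X − X′|] / (2·E[X]) = 2Φ(σ/√2) − 1. -/
open MeasureTheory ProbabilityTheory Real Set
open scoped ENNReal NNReal

lemma gauss_lintegral_bridge (m : ℝ) {f : ℝ → ℝ≥0∞} (hf : Measurable f) :
    ∫⁻ x, f x ∂(gaussianReal m 1) = ∫⁻ x, gaussianPDF m 1 x * f x := by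
  rw [gaussianReal_of_var_ne_zero m one_ne_zero,
    lintegral_withDensity_eq_lintegral_mul _ (measurable_gaussianPDF m 1) hf]
  rfl

lemma tilt_pdf (σ x : ℝ) :
    rexp (σ * x) * gaussianPDFReal 0 1 x = rexp (σ^2/2) * gaussianPDFReal σ 1 x := by
  simp only [gaussianPDFReal, NNReal.coe_one, mul_one, sub_zero]
  rw [mul_left_comm, mul_comm (rexp (σ^2/2)), mul_assoc, ← exp_add, ← exp_add]
  ring_nf

lemma lintegral_tilt (σ : ℝ) {g : ℝ → ℝ≥0∞} (hg : Measurable g) :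
    ∫⁻ x, ENNReal.ofReal (rexp (σ * x)) * g x ∂(gaussianReal 0 1)
      = ENNReal.ofReal (rexp (σ^2/2)) * ∫⁻ x, g (x + σ) ∂(gaussianReal 0 1) := by
  rw [gauss_lintegral_bridge 0 (f := fun x => ENNReal.ofReal (rexp (σ * x)) * g x) (((measurable_const_mul σ).exp.ennreal_ofReal).mul hg)]
  have h1 : ∀ x, gaussianPDF 0 1 x * (ENNReal.ofReal (rexp (σ * x)) * g x)
      = ENNReal.ofReal (rexp (σ^2/2)) * (gaussianPDF σ 1 x * g x) := by
    intro x
    rw [← mul_assoc, ← mul_assoc, mul_comm (gaussianPDF 0 1 x)]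
    congr 1
    rw [gaussianPDF, gaussianPDF, ← ENNReal.ofReal_mul (exp_nonneg _),
      ← ENNReal.ofReal_mul (exp_nonneg _), tilt_pdf]
  simp_rw [h1]
  rw [lintegral_const_mul (f := fun x => gaussianPDF σ 1 x * g x) _ ((measurable_gaussianPDF σ 1).mul hg),
    ← gauss_lintegral_bridge σ hg]
  have h2 : (gaussianReal 0 1).map (· + σ) = gaussianReal σ 1 := by
    rw [gaussianReal_map_add_const σ, zero_add]
  rw [← h2, lintegral_map hg (measurable_add_const σ)]

lemma pdf_mul (s x : ℝ) :
    gaussianPDFReal 0 1 x * gaussianPDFReal 0 1 (x + s)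
      = gaussianPDFReal 0 2 s * gaussianPDFReal (-(s/2)) (1/2) x := by
  simp only [gaussianPDFReal, NNReal.coe_one, NNReal.coe_two, NNReal.coe_div, NNReal.coe_ofNat,
    mul_one, sub_zero, NNReal.coe_one, sub_neg_eq_add]
  rw [mul_mul_mul_comm, mul_mul_mul_comm ((√(2*π*2))⁻¹), ← exp_add, ← exp_add]
  congr 1
  · rw [← mul_inv, ← mul_inv, ← Real.sqrt_mul (by positivity), ← Real.sqrt_mul (by positivity)]
    congr 2
    ring
  · congr 1
    ring

lemma conv_inner (s : ℝ) :
    ∫⁻ x, gaussianPDF 0 1 x * gaussianPDF 0 1 (x + s) = gaussianPDF 0 2 s := by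
  have h : ∀ x, gaussianPDF 0 1 x * gaussianPDF 0 1 (x + s)
      = gaussianPDF 0 2 s * ENNReal.ofReal (gaussianPDFReal (-(s/2)) (1/2) x) := by
    intro x
    rw [gaussianPDF, gaussianPDF, gaussianPDF, ← ENNReal.ofReal_mul (gaussianPDFReal_nonneg _ _ _),
      ← ENNReal.ofReal_mul (gaussianPDFReal_nonneg _ _ _), pdf_mul]
  simp_rw [h]
  rw [lintegral_const_mul _ (measurable_gaussianPDFReal _ _).ennreal_ofReal,
    lintegral_gaussianPDFReal_eq_one (-(s/2)) (by norm_num), mul_one]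

lemma measurable_cdf_enn (ν : Measure ℝ) : Measurable (fun x => ν (Iic x)) :=
  Monotone.measurable (fun a b hab => measure_mono (Iic_subset_Iic.2 hab))

lemma gauss_two_Iic (σ : ℝ) :
    gaussianReal 0 2 (Iic σ) = gaussianReal 0 1 (Iic (σ / Real.sqrt 2)) := by
  have h2 : (NNReal.mk ((Real.sqrt 2)^2) (sq_nonneg _) * 1 : ℝ≥0) = 2 := by
    ext
    rw [NNReal.coe_mul, NNReal.coe_one, mul_one, NNReal.coe_mk]
    simp [Real.sq_sqrt (by norm_num : (2:ℝ) ≥ 0)]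
  have hmap := gaussianReal_map_const_mul (μ := 0) (v := 1) (Real.sqrt 2)
  rw [mul_zero, h2] at hmap
  rw [← hmap, Measure.map_apply (measurable_const_mul _) measurableSet_Iic]
  congr 1
  ext x
  simp only [mem_preimage, mem_Iic]
  rw [le_div_iff₀ (by positivity : (0:ℝ) < Real.sqrt 2), mul_comm]

lemma K_eq (σ : ℝ) :
    ∫⁻ x, gaussianReal 0 1 (Iic (x + σ)) ∂(gaussianReal 0 1)
      = gaussianReal 0 1 (Iic (σ / Real.sqrt 2)) := by
  rw [gauss_lintegral_bridge 0 (f := fun x => gaussianReal 0 1 (Iic (x + σ)))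
    ((measurable_cdf_enn _).comp (measurable_add_const σ))]
  have hIic : ∀ x : ℝ, gaussianReal 0 1 (Iic (x + σ))
      = ∫⁻ s, (Iic σ).indicator (fun s => gaussianPDF 0 1 (s + x)) s := by
    intro x
    rw [gaussianReal_apply 0 one_ne_zero, ← lintegral_indicator measurableSet_Iic,
      ← lintegral_add_right_eq_self (fun y => (Iic (x + σ)).indicator (gaussianPDF 0 1) y) x]
    congr 1
    ext s
    by_cases h : s ≤ σ
    · rw [indicator_of_mem (by simp [mem_Iic]; linarith),
        indicator_of_mem (by simpa [mem_Iic] using h)]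
    · rw [indicator_of_notMem (by simp [mem_Iic]; linarith),
        indicator_of_notMem (by simpa [mem_Iic] using h)]
  simp_rw [hIic]
  have hmeas : Measurable (Function.uncurry fun x s =>
      gaussianPDF 0 1 x * (Iic σ).indicator (fun s => gaussianPDF 0 1 (s + x)) s) := by
    apply Measurable.mul
    · exact (measurable_gaussianPDF 0 1).comp measurable_fst
    · apply Measurable.indicator
      · exact (measurable_gaussianPDF 0 1).comp (measurable_snd.add measurable_fst)
      · exact measurableSet_Iic.preimage measurable_snd
  calc ∫⁻ x, gaussianPDF 0 1 x * ∫⁻ s, (Iic σ).indicator (fun s => gaussianPDF 0 1 (s + x)) s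
      = ∫⁻ x, ∫⁻ s, gaussianPDF 0 1 x * (Iic σ).indicator (fun s => gaussianPDF 0 1 (s + x)) s := by
        congr 1; ext x
        exact (lintegral_const_mul _ (Measurable.indicator
          ((measurable_gaussianPDF 0 1).comp (measurable_id'.add_const x)) measurableSet_Iic)).symm
    _ = ∫⁻ s, ∫⁻ x, gaussianPDF 0 1 x * (Iic σ).indicator (fun s => gaussianPDF 0 1 (s + x)) s := by
        exact lintegral_lintegral_swap hmeas.aemeasurable
    _ = ∫⁻ s, (Iic σ).indicator (fun s => gaussianPDF 0 2 s) s := by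
        congr 1; ext s
        by_cases h : s ∈ Iic σ
        · simp only [indicator_of_mem h]
          have hc : ∀ x : ℝ, gaussianPDF 0 1 x * gaussianPDF 0 1 (s + x)
              = gaussianPDF 0 1 x * gaussianPDF 0 1 (x + s) := fun x => by rw [add_comm s x]
          simp_rw [hc]
          exact conv_inner s
        · simp [indicator_of_notMem h]
    _ = gaussianReal 0 2 (Iic σ) := by
        rw [lintegral_indicator measurableSet_Iic, gaussianReal_apply 0 (by norm_num)]
    _ = gaussianReal 0 1 (Iic (σ / Real.sqrt 2)) := gauss_two_Iic σ

lemma hI (σ : ℝ) :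
    ∫⁻ x, ENNReal.ofReal (rexp (σ * x)) * (gaussianReal 0 1) (Iic x) ∂(gaussianReal 0 1)
      = ENNReal.ofReal (rexp (σ^2/2)) * (gaussianReal 0 1) (Iic (σ / Real.sqrt 2)) := by
  rw [lintegral_tilt σ (measurable_cdf_enn (gaussianReal 0 1)), K_eq σ]

lemma hD (σ : ℝ) :
    ∫⁻ x, ENNReal.ofReal (rexp (σ * x)) ∂(gaussianReal 0 1) = ENNReal.ofReal (rexp (σ^2/2)) := by
  have := lintegral_tilt σ (g := fun _ => 1) measurable_const
  simpa using this

lemma hM (σ : ℝ) :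
    ∫⁻ p : ℝ × ℝ, ENNReal.ofReal (rexp (σ * max p.1 p.2)) ∂((gaussianReal 0 1).prod (gaussianReal 0 1))
      = 2 * (ENNReal.ofReal (rexp (σ^2/2)) * (gaussianReal 0 1) (Iic (σ / Real.sqrt 2))) := by
  have hsplit : ∀ p : ℝ × ℝ, ENNReal.ofReal (rexp (σ * max p.1 p.2))
      = {q : ℝ × ℝ | q.2 ≤ q.1}.indicator (fun q => ENNReal.ofReal (rexp (σ * q.1))) p
        + {q : ℝ × ℝ | q.1 < q.2}.indicator (fun q => ENNReal.ofReal (rexp (σ * q.2))) p := by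
    rintro ⟨x, y⟩
    rcases le_or_gt y x with h | h
    · rw [indicator_of_mem (by exact h), indicator_of_notMem (by simpa using h), add_zero,
        max_eq_left h]
    · rw [indicator_of_notMem (by simpa using h), indicator_of_mem (by exact h), zero_add,
        max_eq_right h.le]
  have hs1 : MeasurableSet {q : ℝ × ℝ | q.2 ≤ q.1} := measurableSet_le measurable_snd measurable_fst
  have hs2 : MeasurableSet {q : ℝ × ℝ | q.1 < q.2} := measurableSet_lt measurable_fst measurable_snd
  have hm1 : Measurable fun q : ℝ × ℝ => ENNReal.ofReal (rexp (σ * q.1)) :=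
    ((measurable_fst.const_mul σ).exp).ennreal_ofReal
  have hm2 : Measurable fun q : ℝ × ℝ => ENNReal.ofReal (rexp (σ * q.2)) :=
    ((measurable_snd.const_mul σ).exp).ennreal_ofReal
  simp_rw [hsplit]
  rw [lintegral_add_left (hm1.indicator hs1)]
  have h1 : ∫⁻ p : ℝ × ℝ, {q : ℝ × ℝ | q.2 ≤ q.1}.indicator
      (fun q => ENNReal.ofReal (rexp (σ * q.1))) p ∂((gaussianReal 0 1).prod (gaussianReal 0 1))
      = ∫⁻ x, ENNReal.ofReal (rexp (σ * x)) * (gaussianReal 0 1) (Iic x) ∂(gaussianReal 0 1) := by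
    rw [MeasureTheory.lintegral_prod _ ((hm1.indicator hs1)).aemeasurable]
    congr 1; ext x
    have : ∀ y : ℝ, {q : ℝ × ℝ | q.2 ≤ q.1}.indicator
        (fun q => ENNReal.ofReal (rexp (σ * q.1))) (x, y)
        = (Iic x).indicator (fun _ => ENNReal.ofReal (rexp (σ * x))) y := by
      intro y
      by_cases h : y ≤ x
      · rw [indicator_of_mem (by exact h), indicator_of_mem (by exact h)]
      · rw [indicator_of_notMem (by exact h), indicator_of_notMem (by exact h)]
    simp_rw [this]
    rw [lintegral_indicator measurableSet_Iic, setLIntegral_const]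
  have h2 : ∫⁻ p : ℝ × ℝ, {q : ℝ × ℝ | q.1 < q.2}.indicator
      (fun q => ENNReal.ofReal (rexp (σ * q.2))) p ∂((gaussianReal 0 1).prod (gaussianReal 0 1))
      = ∫⁻ y, ENNReal.ofReal (rexp (σ * y)) * (gaussianReal 0 1) (Iic y) ∂(gaussianReal 0 1) := by
    rw [MeasureTheory.lintegral_prod_symm _ ((hm2.indicator hs2)).aemeasurable]
    congr 1; ext y
    have : ∀ x : ℝ, {q : ℝ × ℝ | q.1 < q.2}.indicator
        (fun q => ENNReal.ofReal (rexp (σ * q.2))) (x, y)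
        = (Iio y).indicator (fun _ => ENNReal.ofReal (rexp (σ * y))) x := by
      intro x
      by_cases h : x < y
      · rw [indicator_of_mem (by exact h), indicator_of_mem (by exact h)]
      · rw [indicator_of_notMem (by exact h), indicator_of_notMem (by exact h)]
    simp_rw [this]
    rw [lintegral_indicator measurableSet_Iio, setLIntegral_const]
    have : (gaussianReal 0 1) (Iio y) = (gaussianReal 0 1) (Iic y) := by
      exact measure_congr (Iio_ae_eq_Iic'
        (gaussianReal_absolutelyContinuous 0 one_ne_zero (measure_singleton y)))
    rw [this]
  rw [h1, h2, hI σ, two_mul]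

/-- Gini coefficient of the `LogNormal(μ, σ²)` distribution: if `X = exp(μ + σZ)` and
`X′ = exp(μ + σZ′)` with `Z, Z′` independent standard normals, then
`E[|X − X′|] / (2·E[X]) = 2Φ(σ/√2) − 1`, where `Φ` is the standard normal cdf. -/
theorem lognormal_gini (μ σ : ℝ) (hσ : 0 ≤ σ) :
    (∫ z : ℝ × ℝ, |Real.exp (μ + σ * z.1) - Real.exp (μ + σ * z.2)|
        ∂((gaussianReal 0 1).prod (gaussianReal 0 1)))
      / (2 * ∫ z : ℝ, Real.exp (μ + σ * z) ∂(gaussianReal 0 1))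
    = 2 * cdf (gaussianReal 0 1) (σ / Real.sqrt 2) - 1 := by
  set γ := gaussianReal 0 1 with hγ
  set E := rexp (σ^2/2) with hE
  set c := cdf γ (σ / Real.sqrt 2) with hc
  have hc0 : 0 ≤ c := cdf_nonneg _ _
  have hcE : γ (Iic (σ / Real.sqrt 2)) = ENNReal.ofReal c := (ofReal_cdf _ _).symm
  have hEpos : 0 < E := exp_pos _
  -- measurability
  have hm1 : Measurable fun p : ℝ × ℝ => ENNReal.ofReal (rexp (σ * p.1)) :=
    ((measurable_fst.const_mul σ).exp).ennreal_ofReal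
  have hm2 : Measurable fun p : ℝ × ℝ => ENNReal.ofReal (rexp (σ * p.2)) :=
    ((measurable_snd.const_mul σ).exp).ennreal_ofReal
  have hmabs : Measurable fun p : ℝ × ℝ =>
      ENNReal.ofReal |rexp (σ * p.1) - rexp (σ * p.2)| :=
    (((measurable_fst.const_mul σ).exp.sub (measurable_snd.const_mul σ).exp).abs).ennreal_ofReal
  -- pointwise key identity
  have hkey : ∀ p : ℝ × ℝ, ENNReal.ofReal |rexp (σ * p.1) - rexp (σ * p.2)|
      + (ENNReal.ofReal (rexp (σ * p.1)) + ENNReal.ofReal (rexp (σ * p.2)))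
      = ENNReal.ofReal (rexp (σ * max p.1 p.2)) + ENNReal.ofReal (rexp (σ * max p.1 p.2)) := by
    rintro ⟨x, y⟩
    rw [← ENNReal.ofReal_add (exp_nonneg _) (exp_nonneg _),
      ← ENNReal.ofReal_add (abs_nonneg _) (by positivity),
      ← ENNReal.ofReal_add (exp_nonneg _) (exp_nonneg _)]
    congr 1
    have hmax : rexp (σ * max x y) = max (rexp (σ * x)) (rexp (σ * y)) := by
      rcases le_total x y with h | h
      · rw [max_eq_right h, max_eq_right (exp_le_exp.2 (mul_le_mul_of_nonneg_left h hσ))]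
      · rw [max_eq_left h, max_eq_left (exp_le_exp.2 (mul_le_mul_of_nonneg_left h hσ))]
    rw [hmax]
    rcases le_total (rexp (σ * x)) (rexp (σ * y)) with h | h
    · rw [abs_of_nonpos (by linarith), max_eq_right h]; ring
    · rw [abs_of_nonneg (by linarith), max_eq_left h]; ring
  -- marginals
  have hfst : ∫⁻ p : ℝ × ℝ, ENNReal.ofReal (rexp (σ * p.1)) ∂(γ.prod γ)
      = ENNReal.ofReal E := by
    rw [MeasureTheory.lintegral_prod _ hm1.aemeasurable]
    simp only [lintegral_const, measure_univ, mul_one]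
    exact hD σ
  have hsnd : ∫⁻ p : ℝ × ℝ, ENNReal.ofReal (rexp (σ * p.2)) ∂(γ.prod γ)
      = ENNReal.ofReal E := by
    rw [MeasureTheory.lintegral_prod_symm _ hm2.aemeasurable]
    simp only [lintegral_const, measure_univ, mul_one]
    exact hD σ
  -- the ENNReal equation
  set B' := ∫⁻ p : ℝ × ℝ, ENNReal.ofReal |rexp (σ * p.1) - rexp (σ * p.2)| ∂(γ.prod γ) with hB'
  have hsum : B' + (ENNReal.ofReal E + ENNReal.ofReal E)
      = 2 * (ENNReal.ofReal E * ENNReal.ofReal c) + 2 * (ENNReal.ofReal E * ENNReal.ofReal c) := by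
    have hMc := hM σ
    rw [← hγ, ← hE, hcE] at hMc
    calc B' + (ENNReal.ofReal E + ENNReal.ofReal E)
        = ∫⁻ p : ℝ × ℝ, (ENNReal.ofReal |rexp (σ * p.1) - rexp (σ * p.2)|
            + (ENNReal.ofReal (rexp (σ * p.1)) + ENNReal.ofReal (rexp (σ * p.2)))) ∂(γ.prod γ) := by
          rw [lintegral_add_left hmabs, lintegral_add_left hm1, hfst, hsnd]
      _ = ∫⁻ p : ℝ × ℝ, (ENNReal.ofReal (rexp (σ * max p.1 p.2))
            + ENNReal.ofReal (rexp (σ * max p.1 p.2))) ∂(γ.prod γ) := by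
          simp_rw [hkey]
      _ = 2 * (ENNReal.ofReal E * ENNReal.ofReal c) + 2 * (ENNReal.ofReal E * ENNReal.ofReal c) := by
          rw [lintegral_add_left
            (((measurable_fst.max measurable_snd).const_mul σ).exp.ennreal_ofReal), hMc]
  have hfin : B' ≠ ∞ := by
    intro h
    rw [h] at hsum
    simp only [top_add] at hsum
    exact (by finiteness : 2 * (ENNReal.ofReal E * ENNReal.ofReal c) + 2 * (ENNReal.ofReal E * ENNReal.ofReal c) ≠ ∞) hsum.symm
  -- real version
  have hreal : B'.toReal + 2 * E = 4 * (E * c) := by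
    have h2 : ((2 : ℝ≥0∞) * (ENNReal.ofReal E * ENNReal.ofReal c)).toReal = 2 * (E * c) := by
      rw [ENNReal.toReal_mul, ENNReal.toReal_mul, ENNReal.toReal_ofReal hEpos.le,
        ENNReal.toReal_ofReal hc0, ENNReal.toReal_ofNat]
    have := congrArg ENNReal.toReal hsum
    rw [ENNReal.toReal_add hfin (by finiteness),
      ENNReal.toReal_add ENNReal.ofReal_ne_top ENNReal.ofReal_ne_top,
      ENNReal.toReal_add (by finiteness) (by finiteness), h2,
      ENNReal.toReal_ofReal hEpos.le] at this
    linarith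
  -- numerator
  have hnum : (∫ z : ℝ × ℝ, |Real.exp (μ + σ * z.1) - Real.exp (μ + σ * z.2)| ∂(γ.prod γ))
      = rexp μ * B'.toReal := by
    rw [integral_eq_lintegral_of_nonneg_ae (f := fun z : ℝ × ℝ => |Real.exp (μ + σ * z.1) - Real.exp (μ + σ * z.2)|) (ae_of_all _ (fun p => abs_nonneg _))
      (((((measurable_fst.const_mul σ).const_add μ).exp.sub
        (((measurable_snd.const_mul σ).const_add μ).exp)).abs).aestronglyMeasurable)]
    have hpt : ∀ p : ℝ × ℝ, ENNReal.ofReal |rexp (μ + σ * p.1) - rexp (μ + σ * p.2)|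
        = ENNReal.ofReal (rexp μ) * ENNReal.ofReal |rexp (σ * p.1) - rexp (σ * p.2)| := by
      rintro ⟨x, y⟩
      rw [← ENNReal.ofReal_mul (exp_nonneg _)]
      congr 1
      rw [exp_add, exp_add, ← mul_sub, abs_mul, abs_of_pos (exp_pos μ)]
    simp_rw [hpt]
    rw [lintegral_const_mul _ hmabs, ENNReal.toReal_mul, ENNReal.toReal_ofReal (exp_nonneg μ)]
  -- denominator
  have hden : (∫ z : ℝ, Real.exp (μ + σ * z) ∂γ) = rexp μ * E := by
    rw [integral_eq_lintegral_of_nonneg_ae (ae_of_all _ (fun z => (exp_pos _).le))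
      ((((measurable_const_mul σ).const_add μ).exp).aestronglyMeasurable)]
    have hpt : ∀ z : ℝ, ENNReal.ofReal (rexp (μ + σ * z))
        = ENNReal.ofReal (rexp μ) * ENNReal.ofReal (rexp (σ * z)) := by
      intro z
      rw [← ENNReal.ofReal_mul (exp_nonneg _), ← exp_add]
    simp_rw [hpt]
    rw [lintegral_const_mul _ ((measurable_const_mul σ).exp.ennreal_ofReal), hD σ, ← hE,
      ENNReal.toReal_mul, ENNReal.toReal_ofReal (exp_nonneg μ), ENNReal.toReal_ofReal hEpos.le]
  rw [hnum, hden]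
  have hb : B'.toReal = 4 * (E * c) - 2 * E := by linarith
  rw [hb, div_eq_iff (by positivity)]
  ring
end

section
/- Let R* > −100, V > 0, μ₀ ∈ ℝ, σ₀ > 0, and set α := ln(1 + R*/100), β := (1/2)·ln(1 + (V/100)²). For p ∈ (0,1), define the quantiles Q_p(t) := exp(μ₀ + (α − β)t + √(σ₀² + 2βt)·ζ_p) for t = 0, 1. Then the growth incidence curve GIC(p) := 100·(Q_p(1)/Q_p(0) − 1) satisfies GIC(p) = R* + 100·(1 + R*/100)·( exp( (√(1 + (1/σ₀²)·ln(1 + (V/100)²)) − 1)·σ₀·ζ_p ) / √(1 + (V/100)²) − 1 ). -/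
open MeasureTheory ProbabilityTheory Real

/-- Growth Incidence Curve formula in the flat-growth log-normal model: with
`α = ln(1 + R*/100)`, `β = (1/2)·ln(1 + (V/100)²)`, quantiles
`Q_p(t) = exp(μ₀ + (α−β)t + √(σ₀² + 2βt)·ζ_p)` for `t = 0, 1`, where `ζ_p = Φ⁻¹(p)`,
the GIC `GIC(p) = 100·(Q_p(1)/Q_p(0) − 1)` satisfies
`GIC(p) = R* + 100·(1 + R*/100)·(exp((√(1 + σ₀⁻²·ln(1+(V/100)²)) − 1)·σ₀·ζ_p)/√(1+(V/100)²) − 1)`. -/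
theorem gic_flat_rp
    (Rstar V μ₀ σ₀ : ℝ) (hR : -100 < Rstar) (hV : 0 < V) (hσ₀ : 0 < σ₀)
    (α β : ℝ)
    (hα : α = Real.log (1 + Rstar / 100))
    (hβ : β = (1 / 2) * Real.log (1 + (V / 100) ^ 2))
    (p : ℝ) (hp : p ∈ Set.Ioo (0 : ℝ) 1)
    (ζ : ℝ) (hζ : cdf (gaussianReal 0 1) ζ = p)
    (Q : ℝ → ℝ)
    (hQ : ∀ t, Q t = Real.exp (μ₀ + (α - β) * t + Real.sqrt (σ₀ ^ 2 + 2 * β * t) * ζ)) :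
    100 * (Q 1 / Q 0 - 1)
      = Rstar + 100 * (1 + Rstar / 100) *
          (Real.exp ((Real.sqrt (1 + (1 / σ₀ ^ 2) * Real.log (1 + (V / 100) ^ 2)) - 1)
              * σ₀ * ζ)
            / Real.sqrt (1 + (V / 100) ^ 2) - 1) := by
  set W : ℝ := 1 + (V / 100) ^ 2 with hW
  have hW1 : (1 : ℝ) < W := by
    have : 0 < (V / 100) ^ 2 := by positivity
    simp [hW]; linarith
  have hWpos : (0 : ℝ) < W := by linarith
  have hlogW : 0 ≤ Real.log W := Real.log_nonneg hW1.le
  have hRpos : (0 : ℝ) < 1 + Rstar / 100 := by linarith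
  -- exp β = √W
  have hsqrtW : Real.sqrt W = Real.exp β := by
    have h2 : Real.exp (1 / 2 * Real.log W) ^ 2 = W := by
      rw [sq, ← Real.exp_add, show 1 / 2 * Real.log W + 1 / 2 * Real.log W = Real.log W by ring,
        Real.exp_log hWpos]
    rw [hβ]
    conv_lhs => rw [← h2]
    rw [Real.sqrt_sq (Real.exp_pos _).le]
  -- exp α = 1 + R/100
  have hexpα : Real.exp α = 1 + Rstar / 100 := by rw [hα, Real.exp_log hRpos]
  -- 2β = log W
  have h2β : 2 * β = Real.log W := by rw [hβ]; ring
  -- √(σ₀² + 2β) = σ₀ * √(1 + (1/σ₀²) log W)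
  have hσne : σ₀ ^ 2 ≠ 0 := by positivity
  have hsplit : Real.sqrt (σ₀ ^ 2 + 2 * β * 1)
      = σ₀ * Real.sqrt (1 + (1 / σ₀ ^ 2) * Real.log W) := by
    have : σ₀ ^ 2 + 2 * β * 1 = σ₀ ^ 2 * (1 + (1 / σ₀ ^ 2) * Real.log W) := by
      field_simp
      linarith [h2β]
    rw [this, Real.sqrt_mul (by positivity), Real.sqrt_sq hσ₀.le]
  have hQ1 := hQ 1
  have hQ0 := hQ 0
  have hσ0 : Real.sqrt (σ₀ ^ 2 + 2 * β * 0) = σ₀ := by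
    simp [Real.sqrt_sq hσ₀.le]
  set s := Real.sqrt (1 + (1 / σ₀ ^ 2) * Real.log W) with hs
  have hQ0' : Q 0 = Real.exp (μ₀ + σ₀ * ζ) := by
    rw [hQ0, hσ0]; norm_num
  have hQ1' : Q 1 = Real.exp (μ₀ + (α - β) + σ₀ * s * ζ) := by
    rw [hQ1, hsplit]; ring_nf
  have hdiv : Q 1 / Q 0 = (1 + Rstar / 100) * (Real.exp ((s - 1) * σ₀ * ζ) / Real.sqrt W) := by
    rw [hQ0', hQ1', ← Real.exp_sub, hsqrtW]
    rw [show μ₀ + (α - β) + σ₀ * s * ζ - (μ₀ + σ₀ * ζ) = α + ((s - 1) * σ₀ * ζ - β) by ring]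
    rw [Real.exp_add, hexpα, Real.exp_sub]
  rw [hdiv]
  have hsW : Real.sqrt W ≠ 0 := by positivity
  field_simp
  ring
end

section
/- Let μ₀ ∈ ℝ, σ₀ ≥ 0, α ∈ ℝ, β > 0, T₁ ≥ 0 with σ₀² + 2βT₁ > 0, and τ > 0. Let p₁, p₂ ∈ (0,1), and set q₁ = exp(μ₀ + (α − β)T₁ + √(σ₀² + 2βT₁)·ζ_{p₁}) and q₂ = exp(μ₀ + (α − β)(T₁ + τ) + √(σ₀² + 2β(T₁ + τ))·ζ_{p₂}). Let Z be standard normal and let X̃(T₁ + τ) = q₁·exp((α − β)τ + √(2βτ)·Z). Then P(X̃(T₁ + τ) ≥ q₂) = 1 − Φ( (1/√(ρτ))·( √(1 + ρτ)·ζ_{p₂} − ζ_{p₁} ) ), where ρ = 2β/(σ₀² + 2βT₁). -/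
open MeasureTheory ProbabilityTheory Real

lemma gauss_Ici' (c : ℝ) :
    ((gaussianReal 0 1) (Set.Ici c)).toReal = 1 - cdf (gaussianReal 0 1) c := by
  set μ := gaussianReal 0 1
  have hac := gaussianReal_absolutelyContinuous (0 : ℝ) (v := 1) one_ne_zero
  have hatom : μ {c} = 0 := hac (by simp)
  have h2 : μ (Set.Iic c) = μ (Set.Iio c) := by
    refine le_antisymm ?_ (measure_mono Set.Iio_subset_Iic_self)
    calc μ (Set.Iic c) = μ (Set.Iio c ∪ {c}) := by rw [Set.Iio_union_right]
    _ ≤ μ (Set.Iio c) + μ {c} := measure_union_le _ _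
    _ = μ (Set.Iio c) := by rw [hatom, add_zero]
  have h1 : μ (Set.Ici c) = 1 - μ (Set.Iic c) := by
    rw [← Set.compl_Iio, measure_compl measurableSet_Iio (measure_ne_top _ _),
      measure_univ, h2]
  rw [h1, cdf_eq_real, measureReal_def,
    ENNReal.toReal_sub_of_le ((measure_mono (Set.subset_univ _)).trans_eq measure_univ)
      ENNReal.one_ne_top]
  simp

/-- `(P₁ → P₂)`-mobility formula in the flat-growth log-normal model: with
`q₁ = exp(μ₀ + (α−β)T₁ + √(σ₀² + 2βT₁)·ζ_{p₁})`,
`q₂ = exp(μ₀ + (α−β)(T₁+τ) + √(σ₀² + 2β(T₁+τ))·ζ_{p₂})`, and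
`X̃(T₁+τ) = q₁·exp((α−β)τ + √(2βτ)·Z)` for `Z` standard normal,
`P(X̃(T₁+τ) ≥ q₂) = 1 − Φ((1/√(ρτ))·(√(1+ρτ)·ζ_{p₂} − ζ_{p₁}))`, where
`ρ = 2β/(σ₀² + 2βT₁)`. -/
theorem p1p2_mobility
    (μ₀ σ₀ α β T₁ τ : ℝ) (hσ₀ : 0 ≤ σ₀) (hβ : 0 < β) (hT₁ : 0 ≤ T₁)
    (hpos : 0 < σ₀ ^ 2 + 2 * β * T₁) (hτ : 0 < τ)
    (p₁ p₂ : ℝ) (hp₁ : p₁ ∈ Set.Ioo (0 : ℝ) 1) (hp₂ : p₂ ∈ Set.Ioo (0 : ℝ) 1)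
    (ζ₁ ζ₂ : ℝ)
    (hζ₁ : cdf (gaussianReal 0 1) ζ₁ = p₁) (hζ₂ : cdf (gaussianReal 0 1) ζ₂ = p₂)
    (q₁ q₂ ρ : ℝ)
    (hq₁ : q₁ = Real.exp (μ₀ + (α - β) * T₁ + Real.sqrt (σ₀ ^ 2 + 2 * β * T₁) * ζ₁))
    (hq₂ : q₂ = Real.exp (μ₀ + (α - β) * (T₁ + τ)
        + Real.sqrt (σ₀ ^ 2 + 2 * β * (T₁ + τ)) * ζ₂))
    (hρ : ρ = 2 * β / (σ₀ ^ 2 + 2 * β * T₁)) :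
    ((gaussianReal 0 1)
        {z : ℝ | q₂ ≤ q₁ * Real.exp ((α - β) * τ + Real.sqrt (2 * β * τ) * z)}).toReal
      = 1 - cdf (gaussianReal 0 1)
          ((1 / Real.sqrt (ρ * τ)) * (Real.sqrt (1 + ρ * τ) * ζ₂ - ζ₁)) := by
  set s : ℝ := σ₀ ^ 2 + 2 * β * T₁ with hs
  have hd : (0:ℝ) < 2 * β * τ := by positivity
  have hsd : (0:ℝ) < Real.sqrt (2 * β * τ) := Real.sqrt_pos.mpr hd
  have hss : (0:ℝ) < Real.sqrt s := Real.sqrt_pos.mpr hpos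
  set c : ℝ := (Real.sqrt (s + 2 * β * τ) * ζ₂ - Real.sqrt s * ζ₁) / Real.sqrt (2 * β * τ)
    with hc
  have harg : (1 / Real.sqrt (ρ * τ)) * (Real.sqrt (1 + ρ * τ) * ζ₂ - ζ₁) = c := by
    have h1 : ρ * τ = (2 * β * τ) / s := by rw [hρ]; ring
    have h2 : 1 + ρ * τ = (s + 2 * β * τ) / s := by
      rw [h1]; field_simp
    rw [h2, h1, Real.sqrt_div hd.le, Real.sqrt_div (by positivity), hc]
    field_simp
  have hset : {z : ℝ | q₂ ≤ q₁ * Real.exp ((α - β) * τ + Real.sqrt (2 * β * τ) * z)}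
      = Set.Ici c := by
    ext z
    have he : σ₀ ^ 2 + 2 * β * (T₁ + τ) = s + 2 * β * τ := by rw [hs]; ring
    simp only [Set.mem_setOf_eq, Set.mem_Ici, hq₁, hq₂, he, ← Real.exp_add,
      Real.exp_le_exp, hc, div_le_iff₀ hsd]
    constructor <;> intro h <;> nlinarith
  rw [hset, harg, gauss_Ici']
end

section
/- Let σ₀ ≥ 0, β > 0, τ > 0, and p₁, p₂ ∈ (0,1) with p₂ > p₁. For T₁ ≥ 0 set ρ(T₁) = 2β/(σ₀² + 2βT₁). Then the (p₁ → p₂)-mobility M(T₁) := 1 − Φ( (1/√(ρ(T₁)τ))·( √(1 + ρ(T₁)τ)·ζ_{p₂} − ζ_{p₁} ) ) satisfies lim_{T₁ → ∞} M(T₁) = 0. That is, for a fixed time window τ, the probability of traversing from the p₁-quantile to the p₂-quantile tends to zero as the starting time T₁ tends to infinity. -/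
open MeasureTheory ProbabilityTheory Real

/-- Vanishing mobility for a fixed time window: with `ρ(T₁) = 2β/(σ₀² + 2βT₁)` and
`p₂ > p₁`, the `(p₁ → p₂)`-mobility
`M(T₁) = 1 − Φ((1/√(ρ(T₁)τ))·(√(1+ρ(T₁)τ)·ζ_{p₂} − ζ_{p₁}))` tends to `0` as the
starting time `T₁ → ∞`. -/
theorem mobility_limit_T1
    (σ₀ β τ : ℝ) (hσ₀ : 0 ≤ σ₀) (hβ : 0 < β) (hτ : 0 < τ)
    (p₁ p₂ : ℝ) (hp₁ : p₁ ∈ Set.Ioo (0 : ℝ) 1) (hp₂ : p₂ ∈ Set.Ioo (0 : ℝ) 1)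
    (hlt : p₁ < p₂)
    (ζ₁ ζ₂ : ℝ)
    (hζ₁ : cdf (gaussianReal 0 1) ζ₁ = p₁) (hζ₂ : cdf (gaussianReal 0 1) ζ₂ = p₂)
    (ρ : ℝ → ℝ) (hρ : ∀ T₁, ρ T₁ = 2 * β / (σ₀ ^ 2 + 2 * β * T₁)) :
    Filter.Tendsto
      (fun T₁ : ℝ =>
        1 - cdf (gaussianReal 0 1)
          ((1 / Real.sqrt (ρ T₁ * τ)) * (Real.sqrt (1 + ρ T₁ * τ) * ζ₂ - ζ₁)))
      Filter.atTop (nhds 0) := by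
  have hζ : ζ₁ < ζ₂ := by
    by_contra h
    push_neg at h
    have := monotone_cdf (gaussianReal 0 1) h
    rw [hζ₁, hζ₂] at this
    exact absurd this (not_le.mpr hlt)
  -- ρ T₁ * τ tends to 0 from the right
  have hden : Filter.Tendsto (fun T₁ : ℝ => σ₀ ^ 2 + 2 * β * T₁) Filter.atTop Filter.atTop := by
    apply Filter.tendsto_atTop_add_const_left
    exact (Filter.tendsto_const_mul_atTop_of_pos (by positivity)).mpr Filter.tendsto_id
  have hg0 : Filter.Tendsto (fun T₁ : ℝ => ρ T₁ * τ) Filter.atTop (nhds 0) := by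
    have : Filter.Tendsto (fun T₁ : ℝ => 2 * β * τ / (σ₀ ^ 2 + 2 * β * T₁))
        Filter.atTop (nhds 0) := Filter.Tendsto.div_atTop tendsto_const_nhds hden
    refine this.congr fun T₁ => ?_
    rw [hρ T₁]; ring
  have hgpos : ∀ᶠ T₁ : ℝ in Filter.atTop, 0 < ρ T₁ * τ := by
    filter_upwards [Filter.eventually_gt_atTop (0 : ℝ)] with T₁ hT₁
    rw [hρ T₁]
    have : 0 < σ₀ ^ 2 + 2 * β * T₁ := by positivity
    positivity
  have hg : Filter.Tendsto (fun T₁ : ℝ => ρ T₁ * τ) Filter.atTop (nhdsWithin 0 (Set.Ioi 0)) :=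
    tendsto_nhdsWithin_iff.mpr ⟨hg0, hgpos⟩
  have hsqrt : Filter.Tendsto (fun T₁ : ℝ => Real.sqrt (ρ T₁ * τ)) Filter.atTop
      (nhdsWithin 0 (Set.Ioi 0)) := by
    refine tendsto_nhdsWithin_iff.mpr ⟨?_, ?_⟩
    · have := (Real.continuous_sqrt.tendsto 0).comp hg0
      simpa [Function.comp_def] using this
    · filter_upwards [hgpos] with T₁ h using Real.sqrt_pos.mpr h
  have h1 : Filter.Tendsto (fun T₁ : ℝ => 1 / Real.sqrt (ρ T₁ * τ)) Filter.atTop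
      Filter.atTop := by
    simpa [one_div, Function.comp_def] using tendsto_inv_nhdsGT_zero.comp hsqrt
  have h2 : Filter.Tendsto (fun T₁ : ℝ => Real.sqrt (1 + ρ T₁ * τ) * ζ₂ - ζ₁)
      Filter.atTop (nhds (ζ₂ - ζ₁)) := by
    have hs : Filter.Tendsto (fun T₁ : ℝ => Real.sqrt (1 + ρ T₁ * τ)) Filter.atTop
        (nhds 1) := by
      have := (Real.continuous_sqrt.tendsto (1 + 0)).comp (tendsto_const_nhds.add hg0)
      simpa [Function.comp_def] using this
    simpa using (hs.mul tendsto_const_nhds).sub (tendsto_const_nhds (x := ζ₁))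
  have harg : Filter.Tendsto
      (fun T₁ : ℝ => (1 / Real.sqrt (ρ T₁ * τ)) * (Real.sqrt (1 + ρ T₁ * τ) * ζ₂ - ζ₁))
      Filter.atTop Filter.atTop :=
    Filter.Tendsto.atTop_mul_pos (sub_pos.mpr hζ) h1 h2
  have hc : Filter.Tendsto
      (fun T₁ : ℝ => cdf (gaussianReal 0 1)
        ((1 / Real.sqrt (ρ T₁ * τ)) * (Real.sqrt (1 + ρ T₁ * τ) * ζ₂ - ζ₁)))
      Filter.atTop (nhds 1) := (tendsto_cdf_atTop (gaussianReal 0 1)).comp harg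
  have := (tendsto_const_nhds (x := (1:ℝ)) (f := Filter.atTop (α := ℝ))).sub hc
  simpa using this
end

section
/- Let α : [0,1] → ℝ be continuously differentiable, let F₀ : [0,∞) → [0,1] be a continuously differentiable cumulative distribution function, and suppose q : (0,∞) × [0,∞) → (0,∞) is continuously differentiable and satisfies the implicit equation x = exp(α(F₀(q(x,t)))·t)·q(x,t) for all x > 0 and t ≥ 0 (in particular q(x,0) = x). Then the function F(x,t) := F₀(q(x,t)) satisfies the nonlinear transport equation ∂_t F(x,t) + α(F(x,t))·x·∂_x F(x,t) = 0 for all x > 0, t > 0, with F(x,0) = F₀(x). -/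
open Real Set

/-- Method of characteristics for the income model with percentile-dependent growth and
no randomness: if `q(x,t)` solves the implicit equation `x = exp(α(F₀(q(x,t)))·t)·q(x,t)`
(so in particular `q(x,0) = x`), then `F(x,t) := F₀(q(x,t))` solves the nonlinear
transport equation `∂ₜF + α(F)·x·∂ₓF = 0` for `x > 0, t > 0`, with `F(x,0) = F₀(x)`. -/
theorem characteristics_solve_transport
    (α F₀ : ℝ → ℝ) (q : ℝ → ℝ → ℝ)
    (hα : ContDiff ℝ 1 α)
    (hF₀ : ContDiff ℝ 1 F₀)
    (hF₀mono : MonotoneOn F₀ (Set.Ici 0))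
    (hF₀range : ∀ x ≥ (0 : ℝ), F₀ x ∈ Set.Icc (0 : ℝ) 1)
    (hq : ContDiffOn ℝ 1 (fun z : ℝ × ℝ => q z.1 z.2) (Set.Ioi 0 ×ˢ Set.Ici 0))
    (hqpos : ∀ x > (0 : ℝ), ∀ t ≥ (0 : ℝ), 0 < q x t)
    (himp : ∀ x > (0 : ℝ), ∀ t ≥ (0 : ℝ),
      x = Real.exp (α (F₀ (q x t)) * t) * q x t) :
    (∀ x > (0 : ℝ), F₀ (q x 0) = F₀ x) ∧
      ∀ x > (0 : ℝ), ∀ t > (0 : ℝ),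
        deriv (fun s => F₀ (q x s)) t
          + α (F₀ (q x t)) * x * deriv (fun y => F₀ (q y t)) x = 0 := by
  -- logarithmic form of the implicit equation
  have hlog : ∀ y > (0 : ℝ), ∀ s ≥ (0 : ℝ),
      α (F₀ (q y s)) * s + Real.log (q y s) = Real.log y := by
    intro y hy s hs
    calc α (F₀ (q y s)) * s + Real.log (q y s)
        = Real.log (Real.exp (α (F₀ (q y s)) * s) * q y s) := by
          rw [Real.log_mul (Real.exp_ne_zero _) (hqpos y hy s hs).ne', Real.log_exp]
      _ = Real.log y := by rw [← himp y hy s hs]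
  constructor
  · intro x hx
    have h0 : x = q x 0 := by simpa using himp x hx 0 le_rfl
    rw [← h0]
  · intro x hx t ht
    set u := q x t with hu_def
    have hu : 0 < u := hqpos x hx t ht.le
    -- differentiability of q at the interior point (x, t)
    have hmem : (Set.Ioi (0:ℝ) ×ˢ Set.Ici (0:ℝ)) ∈ nhds ((x, t) : ℝ × ℝ) := by
      refine Filter.mem_of_superset
        ((isOpen_Ioi.prod isOpen_Ioi).mem_nhds ⟨hx, ht⟩) ?_
      exact Set.prod_mono subset_rfl Set.Ioi_subset_Ici_self
    have hP : DifferentiableAt ℝ (fun z : ℝ × ℝ => q z.1 z.2) (x, t) :=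
      ((hq.differentiableOn one_ne_zero) (x, t) ⟨hx, ht.le⟩).differentiableAt hmem
    set L := fderiv ℝ (fun z : ℝ × ℝ => q z.1 z.2) (x, t) with hL_def
    set ut := L (0, 1) with hut_def
    set ux := L (1, 0) with hux_def
    have hut : HasDerivAt (fun s => q x s) ut t := by
      have := hP.hasFDerivAt.comp_hasDerivAt t
        ((hasDerivAt_const t x).prodMk (hasDerivAt_id t))
      exact this
    have hux : HasDerivAt (fun y => q y t) ux x := by
      have := hP.hasFDerivAt.comp_hasDerivAt x
        ((hasDerivAt_id x).prodMk (hasDerivAt_const x t))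
      exact this
    set d := deriv F₀ u with hd_def
    set F := F₀ u with hF_def
    set a := α F with ha_def
    set a' := deriv α F with ha'_def
    have hF₀d : HasDerivAt F₀ d u :=
      ((hF₀.differentiable one_ne_zero) u).hasDerivAt
    have hαd : HasDerivAt α a' F :=
      ((hα.differentiable one_ne_zero) F).hasDerivAt
    have hFt : HasDerivAt (fun s => F₀ (q x s)) (d * ut) t := hF₀d.comp t hut
    have hFx : HasDerivAt (fun y => F₀ (q y t)) (d * ux) x := hF₀d.comp x hux
    have hαt : HasDerivAt (fun s => α (F₀ (q x s))) (a' * (d * ut)) t :=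
      hαd.comp t hFt
    have hαx : HasDerivAt (fun y => α (F₀ (q y t))) (a' * (d * ux)) x :=
      hαd.comp x hFx
    have hlogt : HasDerivAt (fun s => Real.log (q x s)) (u⁻¹ * ut) t :=
      (Real.hasDerivAt_log hu.ne').comp t hut
    have hlogx : HasDerivAt (fun y => Real.log (q y t)) (u⁻¹ * ux) x :=
      by have h := (Real.hasDerivAt_log hu.ne').comp x hux; exact h
    -- time direction
    have hφ : HasDerivAt (fun s => α (F₀ (q x s)) * s + Real.log (q x s))
        (a' * (d * ut) * t + a * 1 + u⁻¹ * ut) t :=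
      (hαt.mul (hasDerivAt_id t)).add hlogt
    have hev1 : (fun _ : ℝ => Real.log x) =ᶠ[nhds t]
        (fun s => α (F₀ (q x s)) * s + Real.log (q x s)) :=
      (eventually_gt_nhds ht).mono fun s hs => (hlog x hx s hs.le).symm
    have E1 : a' * (d * ut) * t + a * 1 + u⁻¹ * ut = 0 :=
      (hφ.congr_of_eventuallyEq hev1).unique (hasDerivAt_const t (Real.log x))
    -- space direction
    have hψ : HasDerivAt (fun y => α (F₀ (q y t)) * t + Real.log (q y t))
        (a' * (d * ux) * t + u⁻¹ * ux) x :=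
      (hαx.mul_const t).add hlogx
    have hev2 : (fun y : ℝ => Real.log y) =ᶠ[nhds x]
        (fun y => α (F₀ (q y t)) * t + Real.log (q y t)) :=
      (eventually_gt_nhds hx).mono fun y hy => (hlog y hy t ht.le).symm
    have E2 : a' * (d * ux) * t + u⁻¹ * ux = x⁻¹ :=
      (hψ.congr_of_eventuallyEq hev2).unique (Real.hasDerivAt_log hx.ne')
    -- algebra
    set c := a' * d * t + u⁻¹ with hc_def
    have hc1 : ut * c = -a := by rw [hc_def]; linear_combination E1
    have hc2 : ux * c = x⁻¹ := by rw [hc_def]; linear_combination E2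
    have hcne : c ≠ 0 := by
      intro h
      rw [h, mul_zero] at hc2
      exact absurd (inv_eq_zero.mp hc2.symm) hx.ne'
    have hx1 : x * x⁻¹ = 1 := mul_inv_cancel₀ hx.ne'
    have h0 : c * (ut + a * x * ux) = 0 := by
      linear_combination hc1 + a * x * hc2 + a * hx1
    have hsum : ut + a * x * ux = 0 := by
      rcases mul_eq_zero.mp h0 with h | h
      · exact absurd h hcne
      · exact h
    rw [hFt.deriv, hFx.deriv]
    linear_combination d * hsum
end

section
/- Let α : [0,1] → ℝ be continuously differentiable, let F₀ : [0,∞) → [0,1] be a continuously differentiable, strictly increasing cumulative distribution function with density f₀ = F₀′, and suppose q : (0,∞) × [0,∞) → (0,∞) is continuously differentiable and satisfies x = exp(α(F₀(q(x,t)))·t)·q(x,t) for all x > 0, t ≥ 0. Then for every x > 0, t ≥ 0 at which 1 + t·q(x,t)·α′(F₀(q(x,t)))·f₀(q(x,t)) ≠ 0, the spatial derivative of q satisfies ∂_x q(x,t) = exp(−α(F₀(q(x,t)))·t) / (1 + t·q(x,t)·α′(F₀(q(x,t)))·f₀(q(x,t))), and consequently the density f(x,t) := ∂_x [F₀(q(x,t))]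 equals f₀(q(x,t))·exp(−α(F₀(q(x,t)))·t) / (1 + t·q(x,t)·α′(F₀(q(x,t)))·f₀(q(x,t))). -/
open Real Set

/-- Implicit differentiation of the characteristics relation: if
`x = exp(α(F₀(q(x,t)))·t)·q(x,t)`, then wherever
`1 + t·q(x,t)·α′(F₀(q(x,t)))·f₀(q(x,t)) ≠ 0` one has
`∂ₓq(x,t) = exp(−α(F₀(q(x,t)))·t) / (1 + t·q·α′(F₀(q))·f₀(q))`, and consequently the
density `f(x,t) = ∂ₓ[F₀(q(x,t))]` equals
`f₀(q)·exp(−α(F₀(q))·t) / (1 + t·q·α′(F₀(q))·f₀(q))`. -/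
theorem density_formula_no_randomness
    (α F₀ : ℝ → ℝ) (q : ℝ → ℝ → ℝ)
    (hα : ContDiff ℝ 1 α)
    (hF₀ : ContDiff ℝ 1 F₀)
    (hF₀mono : StrictMonoOn F₀ (Set.Ici 0))
    (hF₀range : ∀ x ≥ (0 : ℝ), F₀ x ∈ Set.Icc (0 : ℝ) 1)
    (f₀ : ℝ → ℝ) (hf₀ : f₀ = deriv F₀)
    (hq : ContDiffOn ℝ 1 (fun z : ℝ × ℝ => q z.1 z.2) (Set.Ioi 0 ×ˢ Set.Ici 0))
    (hqpos : ∀ x > (0 : ℝ), ∀ t ≥ (0 : ℝ), 0 < q x t)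
    (himp : ∀ x > (0 : ℝ), ∀ t ≥ (0 : ℝ),
      x = Real.exp (α (F₀ (q x t)) * t) * q x t)
    (x t : ℝ) (hx : 0 < x) (ht : 0 ≤ t)
    (hden : 1 + t * q x t * deriv α (F₀ (q x t)) * f₀ (q x t) ≠ 0) :
    deriv (fun y => q y t) x
        = Real.exp (-(α (F₀ (q x t)) * t))
            / (1 + t * q x t * deriv α (F₀ (q x t)) * f₀ (q x t)) ∧
      deriv (fun y => F₀ (q y t)) x
        = f₀ (q x t) * Real.exp (-(α (F₀ (q x t)) * t))
            / (1 + t * q x t * deriv α (F₀ (q x t)) * f₀ (q x t)) := by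

  have hdiffW : DifferentiableWithinAt ℝ (fun z : ℝ × ℝ => q z.1 z.2)
      (Set.Ioi 0 ×ˢ Set.Ici 0) (x, t) :=
    (hq.differentiableOn one_ne_zero) _ ⟨hx, ht⟩
  have hgd : DifferentiableWithinAt ℝ (fun y : ℝ => ((y, t) : ℝ × ℝ)) (Set.Ioi 0) x :=
    (differentiableAt_id.prodMk (differentiableAt_const t)).differentiableWithinAt
  have hmaps : Set.MapsTo (fun y : ℝ => ((y, t) : ℝ × ℝ)) (Set.Ioi 0)
      (Set.Ioi 0 ×ˢ Set.Ici 0) := fun y hy => ⟨hy, ht⟩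
  have hdiff : DifferentiableAt ℝ (fun y => q y t) x :=
    ((hdiffW.comp (f := fun y : ℝ => ((y, t) : ℝ × ℝ)) x hgd hmaps).differentiableAt (Ioi_mem_nhds hx))
  set Q := q x t with hQ
  set q' := deriv (fun y => q y t) x with hq'def
  have hq' : HasDerivAt (fun y => q y t) q' x := hdiff.hasDerivAt
  have hF : HasDerivAt F₀ (f₀ Q) Q := by
    rw [hf₀]; exact (hF₀.differentiable one_ne_zero Q).hasDerivAt
  have hFq : HasDerivAt (fun y => F₀ (q y t)) (f₀ Q * q') x := hF.comp x hq'
  have hA : HasDerivAt α (deriv α (F₀ Q)) (F₀ Q) :=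
    (hα.differentiable one_ne_zero (F₀ Q)).hasDerivAt
  have hαF : HasDerivAt (fun y => α (F₀ (q y t))) (deriv α (F₀ Q) * (f₀ Q * q')) x :=
    hA.comp x hFq
  have hmul : HasDerivAt (fun y => α (F₀ (q y t)) * t)
      (deriv α (F₀ Q) * (f₀ Q * q') * t) x := hαF.mul_const t
  have hexp : HasDerivAt (fun y => Real.exp (α (F₀ (q y t)) * t))
      (Real.exp (α (F₀ Q) * t) * (deriv α (F₀ Q) * (f₀ Q * q') * t)) x := hmul.exp
  have hprod : HasDerivAt (fun y => Real.exp (α (F₀ (q y t)) * t) * q y t)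
      (Real.exp (α (F₀ Q) * t) * (deriv α (F₀ Q) * (f₀ Q * q') * t) * Q
        + Real.exp (α (F₀ Q) * t) * q') x := hexp.mul hq'
  have heq : (fun y : ℝ => y) =ᶠ[nhds x] (fun y => Real.exp (α (F₀ (q y t)) * t) * q y t) :=
    Filter.eventuallyEq_of_mem (Ioi_mem_nhds hx) (fun y hy => himp y hy t ht)
  have hid : HasDerivAt (fun y : ℝ => y)
      (Real.exp (α (F₀ Q) * t) * (deriv α (F₀ Q) * (f₀ Q * q') * t) * Q
        + Real.exp (α (F₀ Q) * t) * q') x := hprod.congr_of_eventuallyEq heq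
  have key : Real.exp (α (F₀ Q) * t) * (deriv α (F₀ Q) * (f₀ Q * q') * t) * Q
        + Real.exp (α (F₀ Q) * t) * q' = 1 := (hid.unique (hasDerivAt_id x))
  have hE : Real.exp (α (F₀ Q) * t) ≠ 0 := (Real.exp_pos _).ne'
  have key2 : q' * (Real.exp (α (F₀ Q) * t)
      * (1 + t * Q * deriv α (F₀ Q) * f₀ Q)) = 1 := by
    linear_combination key
  have hq'val : q' = Real.exp (-(α (F₀ Q) * t))
      / (1 + t * Q * deriv α (F₀ Q) * f₀ Q) := by
    have h := eq_inv_of_mul_eq_one_left key2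
    rw [h, Real.exp_neg, div_eq_mul_inv, ← mul_inv]
  refine ⟨hq'val, ?_⟩
  rw [hFq.deriv, hq'val]
  ring
end

section
/- Let α : [0,1] → ℝ be continuous, let F : (0,∞) × [0,∞) → [0,1] be continuously differentiable and solve the transport equation ∂_t F(x,t) + α(F(x,t))·x·∂_x F(x,t) = 0, and fix p ∈ (0,1). Suppose Q_p : [0,∞) → (0,∞) is differentiable, satisfies F(Q_p(t), t) = p for all t ≥ 0, and ∂_x F(Q_p(t), t) > 0 for all t ≥ 0. Then Q_p satisfies the ordinary differential equation Q_p′(t) = α(p)·Q_p(t), and hence Q_p(t) = exp(α(p)·t)·Q_p(0) for all t ≥ 0. -/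
open Real Set

/-- Quantile ODE for the transport (no-randomness) income model: if `F` solves
`∂ₜF + α(F)·x·∂ₓF = 0` and `Q_p` is a differentiable `p`-quantile curve
(`F(Q_p(t),t) = p` with `∂ₓF(Q_p(t),t) > 0`), then `Q_p′(t) = α(p)·Q_p(t)` and hence
`Q_p(t) = exp(α(p)·t)·Q_p(0)`. -/
theorem quantile_ode_no_randomness
    (α : ℝ → ℝ) (hα : Continuous α)
    (F : ℝ → ℝ → ℝ)
    (hFreg : ContDiffOn ℝ 1 (fun z : ℝ × ℝ => F z.1 z.2) (Set.Ioi 0 ×ˢ Set.Ici 0))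
    (hFrange : ∀ x > (0 : ℝ), ∀ t ≥ (0 : ℝ), F x t ∈ Set.Icc (0 : ℝ) 1)
    (hPDE : ∀ x > (0 : ℝ), ∀ t ≥ (0 : ℝ),
      deriv (fun s => F x s) t + α (F x t) * x * deriv (fun y => F y t) x = 0)
    (p : ℝ) (hp : p ∈ Set.Ioo (0 : ℝ) 1)
    (Q : ℝ → ℝ) (hQdiff : Differentiable ℝ Q)
    (hQpos : ∀ t ≥ (0 : ℝ), 0 < Q t)
    (hQquant : ∀ t ≥ (0 : ℝ), F (Q t) t = p)
    (hfpos : ∀ t ≥ (0 : ℝ), 0 < deriv (fun y => F y t) (Q t)) :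
    (∀ t ≥ (0 : ℝ), deriv Q t = α p * Q t) ∧
      ∀ t ≥ (0 : ℝ), Q t = Real.exp (α p * t) * Q 0 := by
  set c := α p with hc
  -- Step 1: the ODE at interior times t > 0, via the chain rule and the PDE.
  have key : ∀ t > (0:ℝ), deriv Q t = c * Q t := by
    intro t ht
    have hx : 0 < Q t := hQpos t ht.le
    have hmem : ((Q t, t) : ℝ × ℝ) ∈ (Set.Ioi (0:ℝ) ×ˢ Set.Ioi (0:ℝ)) := ⟨hx, ht⟩
    have hopen : IsOpen (Set.Ioi (0:ℝ) ×ˢ Set.Ioi (0:ℝ)) := isOpen_Ioi.prod isOpen_Ioi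
    have hsub : (Set.Ioi (0:ℝ) ×ˢ Set.Ioi (0:ℝ)) ⊆ (Set.Ioi (0:ℝ) ×ˢ Set.Ici (0:ℝ)) :=
      Set.prod_mono le_rfl Set.Ioi_subset_Ici_self
    have hdiff : DifferentiableAt ℝ (fun z : ℝ × ℝ => F z.1 z.2) (Q t, t) :=
      ((hFreg.mono hsub).contDiffAt (hopen.mem_nhds hmem)).differentiableAt one_ne_zero
    set L := fderiv ℝ (fun z : ℝ × ℝ => F z.1 z.2) (Q t, t) with hL
    have hFz : HasFDerivAt (fun z : ℝ × ℝ => F z.1 z.2) L (Q t, t) := hdiff.hasFDerivAt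
    have hpairx : HasDerivAt (fun y : ℝ => (y, t)) ((1:ℝ), (0:ℝ)) (Q t) :=
      (hasDerivAt_id _).prodMk (hasDerivAt_const _ _)
    have hdx' : HasDerivAt ((fun z : ℝ × ℝ => F z.1 z.2) ∘ (fun y => (y, t))) (L (1, 0)) (Q t) :=
      hFz.comp_hasDerivAt_of_eq (Q t) hpairx rfl
    have hdx : HasDerivAt (fun y => F y t) (L (1, 0)) (Q t) := hdx'
    have hpairt : HasDerivAt (fun s : ℝ => ((Q t : ℝ), s)) ((0:ℝ), (1:ℝ)) t :=
      (hasDerivAt_const _ _).prodMk (hasDerivAt_id _)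
    have hdt' : HasDerivAt ((fun z : ℝ × ℝ => F z.1 z.2) ∘ (fun s => ((Q t : ℝ), s))) (L (0, 1)) t :=
      hFz.comp_hasDerivAt_of_eq t hpairt rfl
    have hdt : HasDerivAt (fun s => F (Q t) s) (L (0, 1)) t := hdt'
    have hpairg : HasDerivAt (fun s : ℝ => (Q s, s)) ((deriv Q t), (1:ℝ)) t :=
      ((hQdiff t).hasDerivAt).prodMk (hasDerivAt_id _)
    have hg' : HasDerivAt ((fun z : ℝ × ℝ => F z.1 z.2) ∘ (fun s => (Q s, s))) (L (deriv Q t, 1)) t :=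
      hFz.comp_hasDerivAt_of_eq t hpairg rfl
    have hg : HasDerivAt (fun s => F (Q s) s) (L (deriv Q t, 1)) t := hg'
    have hg0 : HasDerivAt (fun s => F (Q s) s) 0 t := by
      have hev : (fun s => F (Q s) s) =ᶠ[nhds t] fun _ => p := by
        filter_upwards [isOpen_Ioi.eventually_mem ht] with s hs
        exact hQquant s (le_of_lt hs)
      exact (hasDerivAt_const t p).congr_of_eventuallyEq hev
    have hzero : L (deriv Q t, 1) = 0 := hg.unique hg0
    have hdecomp : ((deriv Q t, (1:ℝ)) : ℝ × ℝ) = deriv Q t • ((1:ℝ), (0:ℝ)) + ((0:ℝ), (1:ℝ)) := by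
      simp [Prod.ext_iff]
    have hlin : deriv Q t * L (1, 0) + L (0, 1) = 0 := by
      rw [← smul_eq_mul, ← L.map_smul, ← L.map_add, ← hdecomp, hzero]
    have hpde := hPDE (Q t) hx t ht.le
    rw [hQquant t ht.le, hdt.deriv, hdx.deriv] at hpde
    have hfx : 0 < L (1, 0) := by
      have := hfpos t ht.le
      rwa [hdx.deriv] at this
    have : deriv Q t * L (1, 0) = (c * Q t) * L (1, 0) := by
      have h1 : deriv Q t * L (1, 0) = - L (0, 1) := by linarith
      have h2 : (c * Q t) * L (1, 0) = - L (0, 1) := by rw [hc]; linarith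
      rw [h1, h2]
    exact mul_right_cancel₀ (ne_of_gt hfx) this
  -- Step 2: integrate the ODE.
  have expo : ∀ t ≥ (0:ℝ), Q t = Real.exp (c * t) * Q 0 := by
    set h : ℝ → ℝ := fun s => Q s * Real.exp (-(c * s)) with hh
    have hcont : Continuous h := by
      exact hQdiff.continuous.mul ((Real.continuous_exp).comp (continuous_const.mul continuous_id).neg)
    have hderiv0 : ∀ s > (0:ℝ), HasDerivAt h 0 s := by
      intro s hs
      have hQ' : HasDerivAt Q (c * Q s) s := by
        have := (hQdiff s).hasDerivAt
        rwa [key s hs] at this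
      have hexp : HasDerivAt (fun s : ℝ => Real.exp (-(c * s))) (-c * Real.exp (-(c * s))) s := by
        have h1 : HasDerivAt (fun s : ℝ => -(c * s)) (-c) s := by
          have h1' := ((hasDerivAt_id s).const_mul c).neg; simp only [mul_one] at h1'; exact h1'
        simpa [mul_comm] using h1.exp
      have := hQ'.mul hexp
      refine this.congr_deriv ?_
      ring
    have hconst : ∀ t > (0:ℝ), h t = h 0 := by
      intro t ht
      have hstep : ∀ ε ∈ Set.Ioc (0:ℝ) t, h t = h ε := by
        intro ε hε
        have := constant_of_has_deriv_right_zero (f := h) (a := ε) (b := t)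
          (hcont.continuousOn)
          (fun x hx => ((hderiv0 x (lt_of_lt_of_le hε.1 hx.1)).hasDerivWithinAt))
        exact this t ⟨hε.2, le_refl t⟩
      -- limit ε → 0⁺
      have h1 : Filter.Tendsto h (nhdsWithin 0 (Set.Ioi 0)) (nhds (h 0)) :=
        (hcont.continuousAt).continuousWithinAt
      have h2 : Filter.Tendsto h (nhdsWithin 0 (Set.Ioi 0)) (nhds (h t)) := by
        apply Filter.Tendsto.congr' _ tendsto_const_nhds
        have : Set.Ioc (0:ℝ) t ∈ nhdsWithin (0:ℝ) (Set.Ioi 0) := by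
          rw [← Set.Ioi_inter_Iic]
          exact Filter.inter_mem self_mem_nhdsWithin
            (nhdsWithin_le_nhds (Iic_mem_nhds ht))
        filter_upwards [this] with ε hε
        exact hstep ε hε
      exact tendsto_nhds_unique h2 h1
    intro t ht
    rcases eq_or_lt_of_le ht with rfl | ht'
    · simp
    · have := hconst t ht'
      have h0 : h 0 = Q 0 := by simp [hh]
      have hQt : Q t * Real.exp (-(c * t)) = Q 0 := by rw [← h0, ← this]
      have hepos : Real.exp (-(c * t)) ≠ 0 := Real.exp_ne_zero _
      field_simp at hQt
      rw [← hQt, mul_comm (Q t), ← mul_assoc, ← Real.exp_add]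
      simp
  refine ⟨?_, expo⟩
  intro t ht
  rcases eq_or_lt_of_le ht with rfl | ht'
  · -- derivative at 0 from the right, using the explicit formula
    have hg : HasDerivAt (fun s : ℝ => Real.exp (c * s) * Q 0) (c * Q 0) 0 := by
      have h1 : HasDerivAt (fun s : ℝ => c * s) c 0 := by
        simpa using (hasDerivAt_id (0:ℝ)).const_mul c
      have h2 := h1.exp
      have := h2.mul_const (Q 0)
      simpa using this
    have hQ0 : HasDerivWithinAt Q (deriv Q 0) (Set.Ici 0) 0 := (hQdiff 0).hasDerivAt.hasDerivWithinAt
    have hg' : HasDerivWithinAt Q (c * Q 0) (Set.Ici 0) 0 := by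
      apply (hg.hasDerivWithinAt).congr
      · intro s hs; exact expo s hs
      · simpa using expo 0 le_rfl
    have hu : UniqueDiffWithinAt ℝ (Set.Ici (0:ℝ)) 0 := (uniqueDiffOn_Ici (0:ℝ)) 0 Set.self_mem_Ici
    have e1 := hQ0.derivWithin hu
    have e2 := hg'.derivWithin hu
    rw [← e1, e2]
  · exact key t ht'
end
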